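/- Let k be an algebraically closed field of characteristic p > 0, g a finite-dimensional restricted Lie algebra, m ≥ 1, and g_m = g ⊗ k[t]/(t^{m+1}) with p-mapping (x t^i)^{[p]} = x^{[p]} t^{pi} (zero if pi > m). Fix 0 ≤ k' ≤ m and χ ∈ g_m^* vanishing on g ⊗ span(t^{k'+1}, ..., t^m). Let ψ be the restriction of χ to g_{k'} identified with g ⊗ span(1, t, ..., t^{k'}). Then dim g_m − dim g_m^χ = dim g_{k'} − dim g_{k'}^ψ, where g_m^χ = {x ∈ g_m : χ([x, g_m]) = 0} is the coadjoint stabiliser. -/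

import Mathlib

open TensorProduct Polynomial

section

variable {k : Type*} [Field k] {g : Type*} [LieRing g] [LieAlgebra k g] {m : ℕ}

noncomputable instance : LieAlgebra k (AdjoinRoot ((X : Polynomial k) ^ (m + 1)) ⊗[k] g) where
  lie_smul c x y := by
    rw [← algebraMap_smul (AdjoinRoot ((X : Polynomial k) ^ (m + 1))) c y, lie_smul,
      algebraMap_smul]

variable (k)

/-- The coadjoint stabiliser `L^χ = {x ∈ L : χ(⁅x, L⁆) = 0}` of a functional `χ`. -/
def coadjointStab {L : Type*} [LieRing L] [LieAlgebra k L] (χ : L →ₗ[k] k) :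
    Submodule k L where
  carrier := {x | ∀ y : L, χ ⁅x, y⁆ = 0}
  add_mem' := by intro a b ha hb y; rw [add_lie, map_add, ha, hb, add_zero]
  zero_mem' := by intro y; rw [zero_lie, map_zero]
  smul_mem' := by intro c a ha y; rw [smul_lie, map_smul, ha, smul_zero]

/-- The relative coadjoint stabiliser `{x ∈ S : χ(⁅x, S⁆) = 0}` inside a subalgebra with
underlying subspace `S`. -/
def coadjointStabIn {L : Type*} [LieRing L] [LieAlgebra k L] (S : Submodule k L)
    (χ : L →ₗ[k] k) : Submodule k L where
  carrier := {x | x ∈ S ∧ ∀ y ∈ S, χ ⁅x, y⁆ = 0}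
  add_mem' := by
    intro a b ha hb
    exact ⟨S.add_mem ha.1 hb.1, fun y hy => by rw [add_lie, map_add, ha.2 y hy, hb.2 y hy,
      add_zero]⟩
  zero_mem' := ⟨S.zero_mem, fun y _ => by rw [zero_lie, map_zero]⟩
  smul_mem' := by
    intro c a ha
    exact ⟨S.smul_mem c ha.1, fun y hy => by rw [smul_lie, map_smul, ha.2 y hy, smul_zero]⟩

-- auxiliary lemmas

lemma aux_arith (a b s t' i' x : ℕ) (h1 : a + x = s + i') (h2 : b + x = t' + i') :
    a - b = s - t' := by omega

lemma aux_span_pow_tmul (M : Submodule k (AdjoinRoot ((X : Polynomial k) ^ (m + 1)) ⊗[k] g))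
    (h : ∀ (i : ℕ) (x : g), (AdjoinRoot.root ((X : Polynomial k) ^ (m + 1)) ^ i) ⊗ₜ[k] x ∈ M)
    (z : AdjoinRoot ((X : Polynomial k) ^ (m + 1)) ⊗[k] g) : z ∈ M := by
  have hf : ((X : Polynomial k) ^ (m + 1)) ≠ 0 := pow_ne_zero _ X_ne_zero
  set pb := AdjoinRoot.powerBasis hf with hpb
  induction z using TensorProduct.induction_on with
  | zero => exact M.zero_mem
  | add a b ha hb => exact M.add_mem ha hb
  | tmul a x =>
    have := pb.basis.sum_repr a
    rw [← this]
    rw [TensorProduct.sum_tmul]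
    refine Submodule.sum_mem _ fun i _ => ?_
    rw [← TensorProduct.smul_tmul']
    refine M.smul_mem _ ?_
    rw [pb.basis_eq_pow]
    exact h _ x

lemma aux_finite : Module.Finite k (AdjoinRoot ((X : Polynomial k) ^ (m + 1))) := by
  have hf : ((X : Polynomial k) ^ (m + 1)) ≠ 0 := pow_ne_zero _ X_ne_zero
  exact Module.Finite.of_basis (AdjoinRoot.powerBasis hf).basis

/-- Let `g_m = g ⊗ k[t]/(t^{m+1})` and let `χ` vanish on
`g ⊗ span(t^{k'+1}, ..., t^m)`.  Identifying `g_{k'}` with the subspace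
`S = g ⊗ span(1, ..., t^{k'})` (so that the stabiliser of the restriction `ψ` of `χ` is the
relative stabiliser of `χ` in `S`), one has
`dim g_m − dim g_m^χ = dim g_{k'} − dim g_{k'}^ψ`. -/
theorem reduction_by_degree_stabilizer_dimensions
    (p : ℕ) (hp : p.Prime) [IsAlgClosed k] [CharP k p] [FiniteDimensional k g]
    (m k' : ℕ) (hk' : k' ≤ m) (χ : (AdjoinRoot ((X : Polynomial k) ^ (m + 1)) ⊗[k] g) →ₗ[k] k)
    (hχ : ∀ (i : ℕ), k' < i → ∀ x : g,
      χ ((AdjoinRoot.root ((X : Polynomial k) ^ (m + 1)) ^ i) ⊗ₜ[k] x) = 0) :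
    letI A := AdjoinRoot ((X : Polynomial k) ^ (m + 1))
    letI t : A := AdjoinRoot.root _
    letI S : Submodule k (A ⊗[k] g) :=
      Submodule.span k {z | ∃ i : ℕ, i ≤ k' ∧ ∃ x : g, z = (t ^ i) ⊗ₜ[k] x}
    Module.finrank k (A ⊗[k] g) - Module.finrank k (coadjointStab k χ) =
      Module.finrank k S - Module.finrank k (coadjointStabIn k S χ) := by
  set A := AdjoinRoot ((X : Polynomial k) ^ (m + 1)) with hA
  set t : A := AdjoinRoot.root _ with ht
  set S : Submodule k (A ⊗[k] g) :=
    Submodule.span k {z | ∃ i : ℕ, i ≤ k' ∧ ∃ x : g, z = (t ^ i) ⊗ₜ[k] x} with hS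
  have : Module.Finite k A := aux_finite k
  have : Module.Finite k (A ⊗[k] g) := inferInstance
  set I : Submodule k (A ⊗[k] g) :=
    Submodule.span k {z | ∃ i : ℕ, k' < i ∧ ∃ x : g, z = (t ^ i) ⊗ₜ[k] x} with hI
  -- every element of I is in the stabiliser
  have hIstab : I ≤ coadjointStab k χ := by
    rw [hI, Submodule.span_le]
    rintro _ ⟨i, hi, x, rfl⟩
    intro y
    -- the set of y with χ ⁅t^i ⊗ x, y⁆ = 0 is a submodule
    have key : ∀ y : A ⊗[k] g, χ ⁅(t ^ i) ⊗ₜ[k] x, y⁆ = 0 := by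
      intro y
      set M : Submodule k (A ⊗[k] g) :=
        { carrier := {y | χ ⁅(t ^ i) ⊗ₜ[k] x, y⁆ = 0}
          add_mem' := fun ha hb => by
            simp only [Set.mem_setOf_eq, lie_add, map_add] at *
            exact (congrArg χ (lie_add ((t ^ i) ⊗ₜ[k] x) _ _)).trans
              ((map_add χ _ _).trans ((congrArg₂ (· + ·) ha hb).trans (add_zero 0)))
          zero_mem' := by simp; exact (congrArg χ (lie_zero ((t ^ i) ⊗ₜ[k] x))).trans (map_zero χ)
          smul_mem' := fun c a ha => by
            simp only [Set.mem_setOf_eq, lie_smul, map_smul] at *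
            have e := congrArg χ (lie_smul c ((t ^ i) ⊗ₜ[k] x) a)
            rw [map_smul] at e
            exact e.trans ((congrArg (c • ·) ha).trans (smul_zero c)) } with hM
      refine aux_span_pow_tmul k M ?_ y
      intro j v
      show χ ⁅(t ^ i) ⊗ₜ[k] x, (t ^ j) ⊗ₜ[k] v⁆ = 0
      rw [LieAlgebra.ExtendScalars.bracket_tmul, ← pow_add]
      exact hχ (i + j) (lt_of_lt_of_le hi (Nat.le_add_right _ _)) _
    exact key y
  -- S ⊔ I = ⊤
  have hSI : S ⊔ I = ⊤ := by
    rw [eq_top_iff]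
    intro z _
    refine aux_span_pow_tmul k (S ⊔ I) ?_ z
    intro i x
    rcases le_or_gt i k' with h | h
    · exact Submodule.mem_sup_left (Submodule.subset_span ⟨i, h, x, rfl⟩)
    · exact Submodule.mem_sup_right (Submodule.subset_span ⟨i, h, x, rfl⟩)
  -- stab = stabIn ⊔ I
  have hstab : coadjointStab k χ = coadjointStabIn k S χ ⊔ I := by
    apply le_antisymm
    · intro z hz
      have : z ∈ S ⊔ I := hSI ▸ Submodule.mem_top
      obtain ⟨s, hs, u, hu, rfl⟩ := Submodule.mem_sup.mp this
      have hustab : u ∈ coadjointStab k χ := hIstab hu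
      have hsstab : s ∈ coadjointStab k χ := by
        have := (coadjointStab k χ).sub_mem hz hustab
        simpa using this
      refine Submodule.add_mem_sup ?_ hu
      exact ⟨hs, fun y _ => hsstab y⟩
    · refine sup_le ?_ hIstab
      intro s hs
      obtain ⟨hsS, hsχ⟩ := hs
      intro y
      have hy : y ∈ S ⊔ I := hSI ▸ Submodule.mem_top
      obtain ⟨y₁, hy₁, y₂, hy₂, rfl⟩ := Submodule.mem_sup.mp hy
      have h2 : χ ⁅s, y₂⁆ = 0 := by
        have := hIstab hy₂ s
        rw [← lie_skew, map_neg, this, neg_zero]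
      rw [lie_add, map_add, hsχ y₁ hy₁, h2, add_zero]
  -- S ⊓ I = stabIn ⊓ I
  have hinf : S ⊓ I = coadjointStabIn k S χ ⊓ I := by
    apply le_antisymm
    · rintro z ⟨hzS, hzI⟩
      exact ⟨⟨hzS, fun y _ => hIstab hzI y⟩, hzI⟩
    · rintro z ⟨hz, hzI⟩
      exact ⟨hz.1, hzI⟩
  have e1 := Submodule.finrank_sup_add_finrank_inf_eq S I
  have e2 := Submodule.finrank_sup_add_finrank_inf_eq (coadjointStabIn k S χ) I
  rw [hSI, finrank_top] at e1
  rw [← hstab, ← hinf] at e2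
  have le1 : Module.finrank k (coadjointStab k χ) ≤ Module.finrank k (A ⊗[k] g) :=
    Submodule.finrank_le _
  have le2 : Module.finrank k (coadjointStabIn k S χ) ≤ Module.finrank k S :=
    Submodule.finrank_mono (fun z hz => hz.1)
  have e3 : Module.finrank k (A ⊗[k] g) + Module.finrank k ↥(S ⊓ I) = Module.finrank k S + Module.finrank k I := e1
  have e4 : Module.finrank k ↥(coadjointStab k χ) + Module.finrank k ↥(S ⊓ I) =
      Module.finrank k ↥(coadjointStabIn k S χ) + Module.finrank k I := e2
  exact aux_arith _ _ _ _ _ _ e3 e4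

end
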